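/- Let Λ ∈ ℝ^{n×n} be symmetric positive semidefinite with all diagonal entries positive, fix an index m and a nonzero real p, and define λ_l = Λ_{m,l}·p for each l and normalized values λ_l^N = |λ_l|/sqrt(Λ_{l,l}). Then λ_m^N = max over l of λ_l^N. -/

import Mathlib

lemma cs_psd {n : ℕ} (Λ : Matrix (Fin n) (Fin n) ℝ) (hsymm : Λ.IsSymm)
    (hpsd : Λ.PosSemidef) (m l : Fin n) :
    Λ m l * Λ m l ≤ Λ m m * Λ l l := by
  have h : ∀ t : ℝ, 0 ≤ Λ m m * (t * t) + (2 * Λ m l) * t + Λ l l := by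
    intro t
    have := hpsd.dotProduct_mulVec_nonneg (t • (Pi.single m 1 : Fin n → ℝ) + (Pi.single l 1 : Fin n → ℝ))
    have hml : Λ l m = Λ m l := by
      have := congrFun (congrFun hsymm.symm l) m
      simpa [Matrix.transpose_apply] using this
    simp only [Matrix.mulVec_add, Matrix.mulVec_smul, dotProduct_add,
      add_dotProduct, smul_dotProduct, dotProduct_smul,
      Matrix.mulVec_single, single_dotProduct, dotProduct_single,
      RCLike.star_def, star_trivial] at this
    simp only [mul_one, one_mul, smul_eq_mul, op_smul_eq_mul, Matrix.col_apply] at this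
    rw [hml] at this
    nlinarith [this]
  have := discrim_le_zero h
  simp only [discrim] at this
  nlinarith [this]

theorem stmt_11 {n : ℕ} (Λ : Matrix (Fin n) (Fin n) ℝ) (hsymm : Λ.IsSymm)
    (hpsd : Λ.PosSemidef) (hdiag : ∀ l, 0 < Λ l l)
    (m : Fin n) (p : ℝ) (hp : p ≠ 0)
    (lam : Fin n → ℝ) (hlam : ∀ l, lam l = Λ m l * p)
    (lamN : Fin n → ℝ) (hlamN : ∀ l, lamN l = |lam l| / Real.sqrt (Λ l l)) :
    IsGreatest (Set.range lamN) (lamN m) := by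
  constructor
  · exact ⟨m, rfl⟩
  · rintro x ⟨l, rfl⟩
    rw [hlamN, hlamN, hlam, hlam]
    have hm := hdiag m
    have hl := hdiag l
    have hsm : Real.sqrt (Λ m m) > 0 := Real.sqrt_pos.mpr hm
    have hsl : Real.sqrt (Λ l l) > 0 := Real.sqrt_pos.mpr hl
    rw [div_le_div_iff₀ hsl hsm]
    have key : |Λ m l| * Real.sqrt (Λ m m) ≤ |Λ m m| * Real.sqrt (Λ l l) := by
      have h1 : |Λ m l| ≤ Real.sqrt (Λ m m) * Real.sqrt (Λ l l) := by
        rw [← Real.sqrt_mul_self (abs_nonneg (Λ m l)), ← Real.sqrt_mul hm.le]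
        exact Real.sqrt_le_sqrt (by nlinarith [cs_psd Λ hsymm hpsd m l, abs_mul_abs_self (Λ m l)])
      have h2 : |Λ m m| = Real.sqrt (Λ m m) * Real.sqrt (Λ m m) := by
        rw [abs_of_pos hm, Real.mul_self_sqrt hm.le]
      rw [h2]
      nlinarith [h1, hsm.le, hsl.le]
    calc |Λ m l * p| * Real.sqrt (Λ m m) = |Λ m l| * |p| * Real.sqrt (Λ m m) := by rw [abs_mul]
      _ ≤ |Λ m m| * |p| * Real.sqrt (Λ l l) := by nlinarith [abs_nonneg p, key]
      _ = |Λ m m * p| * Real.sqrt (Λ l l) := by rw [abs_mul]
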